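/- Let A ∈ ℝ^{3×3} be symmetric positive definite. Then tr((I₃ − R)A) ≥ 0 for every R ∈ SO(3), with equality if and only if R = I₃. -/

import Mathlib

open Matrix Real

noncomputable def skew (x : Fin 3 → ℝ) : Matrix (Fin 3) (Fin 3) ℝ :=
  !![0, -x 2, x 1; x 2, 0, -x 0; -x 1, x 0, 0]

noncomputable def psi (A : Matrix (Fin 3) (Fin 3) ℝ) : Fin 3 → ℝ :=
  ![(A 2 1 - A 1 2)/2, (A 0 2 - A 2 0)/2, (A 1 0 - A 0 1)/2]

theorem stmt6 (A : Matrix (Fin 3) (Fin 3) ℝ) (hsymm : A.IsSymm) (hpd : A.PosDef)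
    (R : Matrix (Fin 3) (Fin 3) ℝ) (hR : Rᵀ * R = 1) (hdet : R.det = 1) :
    0 ≤ ((1 - R) * A).trace ∧ (((1 - R) * A).trace = 0 ↔ R = 1) := by
  set M : Matrix (Fin 3) (Fin 3) ℝ := 1 - R with hM
  have hMM : Mᵀ * M = M + Mᵀ := by
    simp only [hM, Matrix.transpose_sub, Matrix.transpose_one, Matrix.sub_mul,
      Matrix.mul_sub, Matrix.one_mul, Matrix.mul_one, hR]
    abel
  -- trace(Mᵀ A) = trace(M A)
  have hsym : A = Aᵀ := hsymm.symm
  have htrT : (Mᵀ * A).trace = (M * A).trace := by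
    conv_lhs => rw [← Matrix.trace_transpose, Matrix.transpose_mul, Matrix.transpose_transpose,
      ← hsym, Matrix.trace_mul_comm]
  have h2 : (Mᵀ * M * A).trace = 2 * (M * A).trace := by
    rw [hMM, Matrix.add_mul, Matrix.trace_add, htrT]; ring
  have hcyc : (Mᵀ * M * A).trace = (M * A * Mᵀ).trace := by
    rw [Matrix.trace_mul_cycle, Matrix.trace_mul_cycle]
  -- each diagonal entry is a quadratic form
  have hdiag : ∀ i, (M * A * Mᵀ) i i = dotProduct (M i) (A *ᵥ (M i)) := by
    intro i
    simp only [Matrix.mul_apply, Matrix.transpose_apply, dotProduct, Matrix.mulVec, dotProduct,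
      Finset.sum_mul, Finset.mul_sum]
    rw [Finset.sum_comm]
    apply Finset.sum_congr rfl; intro j _
    apply Finset.sum_congr rfl; intro k _
    ring
  have hnonneg : ∀ i, 0 ≤ (M * A * Mᵀ) i i := by
    intro i
    rw [hdiag i]
    have := hpd.posSemidef.dotProduct_mulVec_nonneg (M i)
    simpa using this
  have htrMAM : (M * A * Mᵀ).trace = ∑ i, (M * A * Mᵀ) i i := rfl
  constructor
  · have : 0 ≤ (M * A * Mᵀ).trace := by
      rw [htrMAM]; exact Finset.sum_nonneg fun i _ => hnonneg i
    nlinarith [hcyc, h2]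
  · constructor
    · intro h0
      have hz : (M * A * Mᵀ).trace = 0 := by rw [← hcyc, h2, h0]; ring
      have hzero : ∀ i ∈ Finset.univ, (M * A * Mᵀ) i i = 0 := by
        rw [htrMAM] at hz
        exact (Finset.sum_eq_zero_iff_of_nonneg fun i _ => hnonneg i).mp hz
      have hMrow : ∀ i, M i = 0 := by
        intro i
        by_contra hne
        have := hpd.dotProduct_mulVec_pos hne
        have h' := hzero i (Finset.mem_univ i)
        rw [hdiag i] at h'
        simp only [star_trivial] at this
        linarith
      have : M = 0 := by ext i j; exact congrFun (hMrow i) j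
      have : R = 1 := by
        have := this
        rw [hM] at this
        linear_combination (norm := (ext i j; simp [Matrix.sub_apply])) -this
      exact this
    · intro h; rw [hM, h]; simp
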